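/- Let r : Fin (n+1) → ℝ, let r' be its restriction to the first n indices, and let 1 ≤ k ≤ n. Then the k-th order statistic of r satisfies r_(k)^{n+1} = r'_(k)^{n} ⊓ (r'_(k-1)^{n} ⊔ r (n+1)), where r'_(0)^{n} is interpreted as −∞ (so for k = 1 the formula reads r_(1)^{n+1} = r'_(1)^{n} ⊓ r(n+1)). -/

import Mathlib

lemma getElem_orderedInsert (a : ℝ) :
    ∀ (l : List ℝ), l.Pairwise (· ≤ ·) → ∀ (j : ℕ) (hj : j < l.length),
      (List.orderedInsert (· ≤ ·) a l)[j]'(by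
          rw [List.orderedInsert_length]; omega) =
        l[j] ⊓ (if h : 1 ≤ j then l[j - 1]'(by omega) ⊔ a else a) := by
  intro l
  induction l with
  | nil => intro _ j hj; simp at hj
  | cons b l ih =>
    intro hs j hj
    rw [List.pairwise_cons] at hs
    by_cases hab : a ≤ b
    · simp only [List.orderedInsert, if_pos hab]
      match j, hj with
      | 0, hj => simp [inf_eq_right.2 hab]
      | 1, hj =>
        have hl0 : 0 < l.length := by simp at hj; omega
        have hb0 : b ≤ l[0] := hs.1 _ (List.getElem_mem _)
        simp [sup_eq_left.2 hab, inf_eq_right.2 hb0]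
      | (m+2), hj =>
        have hm1 : m + 1 < l.length := by simp at hj; omega
        have hm : m < l.length := by omega
        have hbm : b ≤ l[m] := hs.1 _ (List.getElem_mem _)
        have hmono : l[m] ≤ l[m+1] :=
          List.pairwise_iff_getElem.1 hs.2 m (m+1) hm hm1 (by omega)
        simp only [List.getElem_cons_succ, Nat.add_sub_cancel, dif_pos (by omega : 1 ≤ m + 2)]
        simp only [show m + 2 - 1 = m + 1 from rfl, List.getElem_cons_succ]
        rw [sup_eq_left.2 (hab.trans hbm)]
        exact (inf_eq_right.2 hmono).symm
    · push_neg at hab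
      simp only [List.orderedInsert, if_neg (not_le.2 hab)]
      match j, hj with
      | 0, hj => simp [inf_eq_left.2 hab.le]
      | (j+1), hj =>
        have hj' : j < l.length := by simp at hj; omega
        simp only [List.getElem_cons_succ, Nat.add_sub_cancel, dif_pos (by omega : 1 ≤ j + 1)]
        rw [ih hs.2 j hj']
        match j, hj' with
        | 0, hj' => simp [sup_eq_right.2 hab.le]
        | (m+1), hj' =>
          simp only [List.getElem_cons_succ, Nat.add_sub_cancel,
            dif_pos (by omega : 1 ≤ m + 1)]


/-- `orderStat f k` is the `k`-th smallest value (0-indexed, ties counted with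
multiplicity) of the finite sequence `f`. -/
noncomputable def orderStat {n : ℕ} (f : Fin n → ℝ) (k : Fin n) : ℝ :=
  f (Tuple.sort f k)


lemma orderStat_eq_getElem {m : ℕ} (f : Fin m → ℝ) (k : Fin m) :
    orderStat f k = (List.ofFn (f ∘ Tuple.sort f))[k.1]'(by simp) := by
  simp [orderStat]

lemma sorted_ofFn_sort {m : ℕ} (f : Fin m → ℝ) :
    (List.ofFn (f ∘ Tuple.sort f)).Pairwise (· ≤ ·) :=
  (Tuple.monotone_sort f).sortedLE_ofFn.pairwise

/-- Appending the element `r (n+1)` (here `r (Fin.last n)`) to the sequence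
`r' = (r 1, …, r n)`, the `k`-th order statistic satisfies
`r_(k)^{n+1} = r'_(k)^{n} ⊓ (r'_(k-1)^{n} ⊔ r_{n+1})`, where for `k = 1` the term
`r'_(0)^{n}` is `-∞`, so the formula reads `r_(1)^{n+1} = r'_(1)^{n} ⊓ r_{n+1}`. -/
theorem stmt2 {n : ℕ} (r : Fin (n + 1) → ℝ) (r' : Fin n → ℝ)
    (hr' : ∀ i : Fin n, r' i = r i.castSucc)
    (k : ℕ) (hk : 1 ≤ k) (hkn : k ≤ n) :
    orderStat r ⟨k - 1, by omega⟩ =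
      orderStat r' ⟨k - 1, by omega⟩ ⊓
        (if h : 2 ≤ k then orderStat r' ⟨k - 2, by omega⟩ ⊔ r (Fin.last n)
         else r (Fin.last n)) := by
  set a := r (Fin.last n) with ha
  have hperm : List.Perm (List.ofFn (r ∘ Tuple.sort r))
      (List.orderedInsert (· ≤ ·) a (List.ofFn (r' ∘ Tuple.sort r'))) := by
    refine ((Tuple.sort r).ofFn_comp_perm r).trans ?_
    rw [List.ofFn_succ' r]
    have h1 : (fun i : Fin n => r i.castSucc) = r' := by
      funext i; exact (hr' i).symm
    rw [h1, List.concat_eq_append]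
    refine (List.perm_append_singleton _ _).trans ?_
    refine ((((Tuple.sort r').ofFn_comp_perm r').symm).cons a).trans ?_
    exact (List.perm_orderedInsert _ _ _).symm
  have heq : List.ofFn (r ∘ Tuple.sort r) =
      List.orderedInsert (· ≤ ·) a (List.ofFn (r' ∘ Tuple.sort r')) :=
    List.Perm.eq_of_sortedLE (sorted_ofFn_sort r).sortedLE
      (((sorted_ofFn_sort r').orderedInsert _ _).sortedLE) hperm
  have hlen : (List.ofFn (r' ∘ Tuple.sort r')).length = n := by simp
  have hkn' : k - 1 < n := by omega
  rw [orderStat_eq_getElem, orderStat_eq_getElem]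
  have := getElem_orderedInsert a (List.ofFn (r' ∘ Tuple.sort r')) (sorted_ofFn_sort r')
    (k - 1) (by omega)
  simp only [heq]
  refine this.trans ?_
  congr 1
  by_cases h2 : 2 ≤ k
  · rw [dif_pos (by omega : 1 ≤ k - 1), dif_pos h2, orderStat_eq_getElem]
    congr 2
  · rw [dif_neg (by omega : ¬ 1 ≤ k - 1), dif_neg h2]
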